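/- Let B_1 = B_2 = B_3 = C([-1,1], ℝ), B_{12} = B_{13} = ℝ, B_{23} = ℝ × ℝ, with π^1_2 = π^2_1 = π^1_3 = π^3_1 : f ↦ f(1) and π^2_3 = π^3_2 : f ↦ (f(−1), f(1)). Then for all distinct i,j,k ∈ {1,2,3} and all b_i ∈ B_i, b_j ∈ B_j with π^i_j(b_i) = π^j_i(b_j), there exists b_k ∈ B_k with π^i_k(b_i) = π^k_i(b_k) and π^j_k(b_j) = π^k_j(b_k). -/
import Mathlib


noncomputable section

/-- The interval `[-1, 1]`. -/
abbrev II : Set ℝ := Set.Icc (-1 : ℝ) 1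

/-- The point `1 ∈ [-1, 1]`. -/
def p1 : II := ⟨1, by norm_num⟩

/-- The point `-1 ∈ [-1, 1]`. -/
def pm1 : II := ⟨-1, by norm_num⟩

/-- for the family with `π^1_2 = π^2_1 = π^1_3 = π^3_1 : f ↦ f(1)` and
`π^2_3 = π^3_2 : f ↦ (f(-1), f(1))`, the two-element extension property holds: for all
distinct `i, j, k ∈ {1,2,3}` and every compatible pair `(b_i, b_j)` there is a
compatible `b_k` (all six ordered choices of `(i, j, k)` are listed). -/
theorem stmt9 :
    (∀ b1 b2 : C(II, ℝ), b1 p1 = b2 p1 →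
      ∃ b3 : C(II, ℝ), b1 p1 = b3 p1 ∧
        ((b2 pm1, b2 p1) : ℝ × ℝ) = (b3 pm1, b3 p1)) ∧
    (∀ b2 b1 : C(II, ℝ), b2 p1 = b1 p1 →
      ∃ b3 : C(II, ℝ), ((b2 pm1, b2 p1) : ℝ × ℝ) = (b3 pm1, b3 p1) ∧
        b1 p1 = b3 p1) ∧
    (∀ b1 b3 : C(II, ℝ), b1 p1 = b3 p1 →
      ∃ b2 : C(II, ℝ), b1 p1 = b2 p1 ∧
        ((b3 pm1, b3 p1) : ℝ × ℝ) = (b2 pm1, b2 p1)) ∧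
    (∀ b3 b1 : C(II, ℝ), b3 p1 = b1 p1 →
      ∃ b2 : C(II, ℝ), ((b3 pm1, b3 p1) : ℝ × ℝ) = (b2 pm1, b2 p1) ∧
        b1 p1 = b2 p1) ∧
    (∀ b2 b3 : C(II, ℝ), ((b2 pm1, b2 p1) : ℝ × ℝ) = (b3 pm1, b3 p1) →
      ∃ b1 : C(II, ℝ), b2 p1 = b1 p1 ∧ b3 p1 = b1 p1) ∧
    (∀ b3 b2 : C(II, ℝ), ((b3 pm1, b3 p1) : ℝ × ℝ) = (b2 pm1, b2 p1) →
      ∃ b1 : C(II, ℝ), b3 p1 = b1 p1 ∧ b2 p1 = b1 p1) := by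
  refine ⟨fun b1 b2 h => ⟨b2, h, rfl⟩,
    fun b2 b1 h => ⟨b2, rfl, h.symm⟩,
    fun b1 b3 h => ⟨b3, h, rfl⟩,
    fun b3 b1 h => ⟨b3, rfl, h.symm⟩,
    fun b2 b3 h => ⟨b2, rfl, (congrArg Prod.snd h).symm⟩,
    fun b3 b2 h => ⟨b2, congrArg Prod.snd h, rfl⟩⟩
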